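/- arXiv:1210.7509 — 3 statements merged into one kernel-verified Lean document; each statement's English description precedes it below -/
import Mathlib

section
/- Let X be a Banach space and let S(t) be a well-posed continuous dynamical system on X. If S exhibits long-time strong instability near every point of some dense subset D of X, then the set {φ ∈ X : sup_{t>0} ‖S(t)φ‖_X < ∞} of initial data with bounded forward orbit is meager in X (a countable union of nowhere dense sets); consequently the set of φ ∈ X whose forward orbit is unbounded is residual in X, and in particular nonempty. -/
open scoped BigOperators ENNReal NNReal
open Complex

noncomputable section

/-- Frequencies in `ℤ²`. -/
abbrev Z2 : Type := ℤ × ℤ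

/-- Squared Euclidean norm `|n|²` on `ℤ²`. -/
def sq2 (n : Z2) : ℤ := n.1 ^ 2 + n.2 ^ 2

/-- Euclidean dot product on `ℤ²`. -/
def dot2 (m n : Z2) : ℤ := m.1 * n.1 + m.2 * n.2

/-- The resonance factor `ω₄ = |n1|² - |n2|² + |n3|² - |n4|²`. -/
def omega4 (n1 n2 n3 n4 : Z2) : ℤ := sq2 n1 - sq2 n2 + sq2 n3 - sq2 n4

/-- Right-hand side (already multiplied by `i`, i.e. `a_n' = i·(…)`) of the FNLS system
`-i a_n' = -|a_n|² a_n + Σ_{Γ(n)} a_{n1} conj(a_{n2}) a_{n3} e^{i ω₄ t}`. -/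
def fnlsRHS (a : Z2 → ℂ) (n : Z2) (t : ℝ) : ℂ :=
  Complex.I * (-((‖a n‖ : ℂ) ^ 2) * a n +
    ∑' p : Z2 × Z2 × Z2,
      if p.1 - p.2.1 + p.2.2 = n ∧ p.1 ≠ n ∧ p.2.2 ≠ n then
        a p.1 * (starRingEnd ℂ) (a p.2.1) * a p.2.2 *
          Complex.exp (Complex.I * ((omega4 p.1 p.2.1 p.2.2 n : ℤ) : ℂ) * (t : ℂ))
      else 0)

/-- Right-hand side of the `R`-truncated system (interactions with `|ω₄| ≤ R` only). -/
def truncRHS (R : ℕ) (a : Z2 → ℂ) (n : Z2) (t : ℝ) : ℂ :=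
  Complex.I * (-((‖a n‖ : ℂ) ^ 2) * a n +
    ∑' p : Z2 × Z2 × Z2,
      if p.1 - p.2.1 + p.2.2 = n ∧ p.1 ≠ n ∧ p.2.2 ≠ n ∧
          |omega4 p.1 p.2.1 p.2.2 n| ≤ (R : ℤ) then
        a p.1 * (starRingEnd ℂ) (a p.2.1) * a p.2.2 *
          Complex.exp (Complex.I * ((omega4 p.1 p.2.1 p.2.2 n : ℤ) : ℂ) * (t : ℂ))
      else 0)

/-- Right-hand side of the resonant system RFNLS (only `ω₄ = 0` interactions, no phases). -/
def resRHS (a : Z2 → ℂ) (n : Z2) : ℂ :=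
  Complex.I * (-((‖a n‖ : ℂ) ^ 2) * a n +
    ∑' p : Z2 × Z2 × Z2,
      if p.1 - p.2.1 + p.2.2 = n ∧ p.1 ≠ n ∧ p.2.2 ≠ n ∧
          omega4 p.1 p.2.1 p.2.2 n = 0 then
        a p.1 * (starRingEnd ℂ) (a p.2.1) * a p.2.2
      else 0)

/-- `a` is a solution of the FNLS system on the set `I`: absolutely summable values,
locally bounded `ℓ¹` norm, and coordinatewise differentiable satisfying the equation. -/
def IsFNLSSolution (I : Set ℝ) (a : ℝ → Z2 → ℂ) : Prop :=
  (∀ t ∈ I, Summable fun n : Z2 => ‖a t n‖) ∧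
  (∀ t1 ∈ I, ∀ t2 ∈ I, ∃ C : ℝ, ∀ t ∈ Set.Icc t1 t2 ∩ I, (∑' n : Z2, ‖a t n‖) ≤ C) ∧
  (∀ n : Z2, ∀ t ∈ I, HasDerivWithinAt (fun τ => a τ n) (fnlsRHS (a t) n t) I t)

/-- `a` is a solution of the `R`-truncated system on `I`. -/
def IsTruncSolution (R : ℕ) (I : Set ℝ) (a : ℝ → Z2 → ℂ) : Prop :=
  (∀ t ∈ I, Summable fun n : Z2 => ‖a t n‖) ∧
  (∀ t1 ∈ I, ∀ t2 ∈ I, ∃ C : ℝ, ∀ t ∈ Set.Icc t1 t2 ∩ I, (∑' n : Z2, ‖a t n‖) ≤ C) ∧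
  (∀ n : Z2, ∀ t ∈ I, HasDerivWithinAt (fun τ => a τ n) (truncRHS R (a t) n t) I t)

/-- `a` is a solution of the resonant system RFNLS on `I`. -/
def IsRFNLSSolution (I : Set ℝ) (a : ℝ → Z2 → ℂ) : Prop :=
  (∀ t ∈ I, Summable fun n : Z2 => ‖a t n‖) ∧
  (∀ t1 ∈ I, ∀ t2 ∈ I, ∃ C : ℝ, ∀ t ∈ Set.Icc t1 t2 ∩ I, (∑' n : Z2, ‖a t n‖) ≤ C) ∧
  (∀ n : Z2, ∀ t ∈ I, HasDerivWithinAt (fun τ => a τ n) (resRHS (a t) n) I t)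

/-- The square of the `h^s` norm `Σ (1+|n|²)^s |a_n|²`, valued in `ℝ≥0∞`. -/
def hsNormSqE (s : ℝ) (a : Z2 → ℂ) : ℝ≥0∞ :=
  ∑' n : Z2, ENNReal.ofReal ((1 + (sq2 n : ℝ)) ^ s * ‖a n‖ ^ 2)

/-- The toy system with `P` modes `b_1, …, b_P`, with the convention `b_0 = b_{P+1} = 0`. -/
def IsToySolution (P : ℕ) (I : Set ℝ) (b : ℝ → ℕ → ℂ) : Prop :=
  (∀ t ∈ I, b t 0 = 0) ∧
  (∀ t ∈ I, ∀ j : ℕ, P < j → b t j = 0) ∧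
  (∀ j : ℕ, 1 ≤ j → j ≤ P → ∀ t ∈ I,
    HasDerivWithinAt (fun τ => b τ j)
      (Complex.I * (-((‖b t j‖ : ℂ) ^ 2) * b t j
        + 2 * (b t (j + 1)) ^ 2 * (starRingEnd ℂ) (b t j)
        + 2 * (b t (j - 1)) ^ 2 * (starRingEnd ℂ) (b t j))) I t)

/-- `S` satisfies the `R`-closure condition. -/
def RClosed (R : ℕ) (S : Set Z2) : Prop :=
  ∀ n1 n2 n3 : Z2, n1 ∈ S → n2 ∈ S → n3 ∈ S →
    |omega4 n1 n2 n3 (n1 - n2 + n3)| ≤ (R : ℤ) → n1 - n2 + n3 ∈ S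

/-- A rectangle in `ℤ²`: a quadruple of distinct points forming a parallelogram
(`n1 + n3 = n2 + n4`) with `ω₄ = 0`. -/
def IsRectangle (n1 n2 n3 n4 : Z2) : Prop :=
  n1 ≠ n2 ∧ n1 ≠ n3 ∧ n1 ≠ n4 ∧ n2 ≠ n3 ∧ n2 ≠ n4 ∧ n3 ≠ n4 ∧
  n1 + n3 = n2 + n4 ∧ sq2 n1 + sq2 n3 = sq2 n2 + sq2 n4

/-- Closure under completing rectangles: if three vertices of a rectangle lie in `S`,
then so does the fourth. -/
def RectClosed (S : Set Z2) : Prop :=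
  ∀ n1 n2 n3 n4 : Z2, IsRectangle n1 n2 n3 n4 → n1 ∈ S → n2 ∈ S → n3 ∈ S → n4 ∈ S

/-- A nuclear family: a rectangle with parents `n1, n3` in generation `Λ j` and
children `n2, n4` in generation `Λ (j+1)`. -/
def IsNuclearFamily (Λ : ℕ → Finset Z2) (j : ℕ) (n1 n2 n3 n4 : Z2) : Prop :=
  IsRectangle n1 n2 n3 n4 ∧ n1 ∈ Λ j ∧ n3 ∈ Λ j ∧ n2 ∈ Λ (j + 1) ∧ n4 ∈ Λ (j + 1)

/-- Existence and uniqueness (up to trivial permutations) of spouse and children. -/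
def SpouseChildren (Λ : ℕ → Finset Z2) (P : ℕ) : Prop :=
  ∀ j : ℕ, 1 ≤ j → j < P → ∀ n1 ∈ Λ j,
    ∃ n3 n2 n4 : Z2, IsNuclearFamily Λ j n1 n2 n3 n4 ∧
      ∀ n3' n2' n4' : Z2, IsNuclearFamily Λ j n1 n2' n3' n4' →
        n3' = n3 ∧ ((n2' = n2 ∧ n4' = n4) ∨ (n2' = n4 ∧ n4' = n2))

/-- Existence and uniqueness (up to trivial permutations) of sibling and parents. -/
def ParentsSibling (Λ : ℕ → Finset Z2) (P : ℕ) : Prop :=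
  ∀ j : ℕ, 1 ≤ j → j < P → ∀ n2 ∈ Λ (j + 1),
    ∃ n4 n1 n3 : Z2, IsNuclearFamily Λ j n1 n2 n3 n4 ∧
      ∀ n1' n3' n4' : Z2, IsNuclearFamily Λ j n1' n2 n3' n4' →
        n4' = n4 ∧ ((n1' = n1 ∧ n3' = n3) ∨ (n1' = n3 ∧ n3' = n1))

/-- Non-degeneracy: the sibling of a frequency is never equal to its spouse. -/
def NonDegenerate (Λ : ℕ → Finset Z2) : Prop :=
  ∀ j : ℕ, ∀ n1 n2 n3 n4 m2 m3 m4 : Z2,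
    IsNuclearFamily Λ j n1 n2 n3 n4 → IsNuclearFamily Λ (j + 1) n2 m2 m3 m4 → m3 ≠ n4

/-- The union `Λ_1 ∪ … ∪ Λ_P` of all generations. -/
def genFinset (Λ : ℕ → Finset Z2) (P : ℕ) : Finset Z2 := (Finset.Icc 1 P).biUnion Λ

/-- Faithfulness: the only rectangles in `Λ` are (permutations of) nuclear families. -/
def FaithfulGen (Λ : ℕ → Finset Z2) (P : ℕ) : Prop :=
  ∀ n1 n2 n3 n4 : Z2,
    n1 ∈ genFinset Λ P → n2 ∈ genFinset Λ P → n3 ∈ genFinset Λ P → n4 ∈ genFinset Λ P →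
    IsRectangle n1 n2 n3 n4 →
    ∃ j : ℕ, 1 ≤ j ∧ j < P ∧
      ((n1 ∈ Λ j ∧ n3 ∈ Λ j ∧ n2 ∈ Λ (j + 1) ∧ n4 ∈ Λ (j + 1)) ∨
       (n2 ∈ Λ j ∧ n4 ∈ Λ j ∧ n1 ∈ Λ (j + 1) ∧ n3 ∈ Λ (j + 1)))

/-- `S` contains at most one vertex of any rectangle having a vertex at `0`. -/
def NoRectangleWithZero (S : Set Z2) : Prop :=
  ∀ m2 m3 m4 : Z2, IsRectangle 0 m2 m3 m4 →
    ¬(m2 ∈ S ∧ m3 ∈ S) ∧ ¬(m2 ∈ S ∧ m4 ∈ S) ∧ ¬(m3 ∈ S ∧ m4 ∈ S)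

/-- `S1` and `S2` are not connected by any (nondegenerate) parallelogram of
eccentricity `≤ R`. -/
def NotConnected (R : ℕ) (S1 S2 : Set Z2) : Prop :=
  ∀ n1 n2 n3 : Z2,
    ((n1 ∈ S1 ∧ n2 ∈ S1 ∧ n3 ∈ S2) ∨ (n1 ∈ S2 ∧ n2 ∈ S2 ∧ n3 ∈ S1)) →
    (n1 ≠ n2 → n2 ≠ n3 → (R : ℤ) < |omega4 n1 n2 n3 (n1 - n2 + n3)|) ∧
    (n1 ≠ n3 → n3 ≠ n2 → (R : ℤ) < |omega4 n1 n3 n2 (n1 - n3 + n2)|)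

/-- A well-posed continuous dynamical system on a normed space `X`. -/
def IsWellPosedFlow {X : Type*} [NormedAddCommGroup X] (S : ℝ → X → X) : Prop :=
  (∀ x : X, S 0 x = x) ∧
  (∀ t1 t2 : ℝ, ∀ x : X, S (t1 + t2) x = S t1 (S t2 x)) ∧
  (∀ x : X, Continuous fun t : ℝ => S t x) ∧
  (∀ T : ℝ, 0 < T → ∀ x : X, ∀ ε : ℝ, 0 < ε → ∃ δ : ℝ, 0 < δ ∧ ∀ y : X, ‖x - y‖ ≤ δ →
     ∀ t ∈ Set.Icc (-T) T, ‖S t x - S t y‖ ≤ ε)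

/-- `sup_{t > 0} ‖S(t)x‖`, valued in `ℝ≥0∞`. -/
def supOrbitPos {X : Type*} [NormedAddCommGroup X] (S : ℝ → X → X) (x : X) : ℝ≥0∞ :=
  ⨆ t : Set.Ioi (0 : ℝ), (‖S (t : ℝ) x‖₊ : ℝ≥0∞)

/-- `sup_{t ∈ ℝ} ‖S(t)x‖`, valued in `ℝ≥0∞`. -/
def supOrbitAll {X : Type*} [NormedAddCommGroup X] (S : ℝ → X → X) (x : X) : ℝ≥0∞ :=
  ⨆ t : ℝ, (‖S t x‖₊ : ℝ≥0∞)

/-- Long-time strong instability of the flow `S` near `φ`. -/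
def LongTimeStrongInstability {X : Type*} [NormedAddCommGroup X]
    (S : ℝ → X → X) (φ : X) : Prop :=
  ∀ δ : ℝ, 0 < δ → δ < 1 → ∀ K : ℝ, 1 ≤ K →
    ∃ φs : X, ‖φ - φs‖ ≤ δ ∧ ENNReal.ofReal K ≤ supOrbitPos S φs

/-- If a well-posed continuous dynamical system on a Banach space
exhibits long-time strong instability near every point of a dense set, then the set of
initial data with bounded forward orbit is meager; consequently the set of unbounded
forward orbits is residual, in particular nonempty. -/
theorem longtime_instability_dense_implies_generic_unbounded_orbits
    {X : Type*} [NormedAddCommGroup X] [NormedSpace ℝ X] [CompleteSpace X]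
    (S : ℝ → X → X) (hS : IsWellPosedFlow S)
    (D : Set X) (hD : Dense D)
    (hinst : ∀ φ ∈ D, LongTimeStrongInstability S φ) :
    IsMeagre {φ : X | supOrbitPos S φ < ⊤} ∧
    {φ : X | supOrbitPos S φ = ⊤} ∈ residual X ∧
    {φ : X | supOrbitPos S φ = ⊤}.Nonempty := by
  -- The sets of data with orbit bounded by `n`
  set A : ℕ → Set X := fun n => {φ : X | supOrbitPos S φ ≤ (n : ℝ≥0∞)} with hA
  -- Each `A n` is nowhere dense
  have hND : ∀ n : ℕ, IsNowhereDense (A n) := by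
    intro n
    rw [IsNowhereDense, Set.eq_empty_iff_forall_notMem]
    intro x hx
    rcases Metric.isOpen_iff.mp isOpen_interior x hx with ⟨r, hr, hball⟩
    have hballcl : Metric.ball x r ⊆ closure (A n) :=
      hball.trans interior_subset
    -- pick a point of D near x
    rcases Metric.dense_iff.mp hD x (r / 2) (by linarith) with ⟨φ, hφball, hφD⟩
    -- instability gives φ* near φ with huge orbit
    set δ : ℝ := min (r / 4) (1 / 2) with hδdef
    have hδpos : 0 < δ := lt_min (by linarith) (by norm_num)
    have hδlt : δ < 1 := lt_of_le_of_lt (min_le_right _ _) (by norm_num)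
    obtain ⟨φs, hφs_close, hφs_big⟩ :=
      hinst φ hφD δ hδpos hδlt ((n : ℝ) + 2) (by have : (0:ℝ) ≤ n := Nat.cast_nonneg n; linarith)
    -- φ* lies in the ball, hence in the closure of A n
    have hφs_mem : φs ∈ closure (A n) := by
      apply hballcl
      have h1 : dist x φ < r / 2 := Metric.mem_ball'.mp hφball
      have h2 : dist φ φs ≤ δ := by rwa [dist_eq_norm]
      have : dist x φs < r := by
        calc dist x φs ≤ dist x φ + dist φ φs := dist_triangle _ _ _
          _ < r / 2 + δ := by linarith
          _ ≤ r / 2 + r / 4 := by have := min_le_left (r / 4) (1 / 2); linarith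
          _ < r := by linarith
      exact Metric.mem_ball'.mp this
    -- find a time with huge norm
    have hlt : ENNReal.ofReal ((n : ℝ) + 1) < supOrbitPos S φs := by
      refine lt_of_lt_of_le ?_ hφs_big
      exact ENNReal.ofReal_lt_ofReal_iff (by positivity) |>.mpr (by linarith)
    rw [supOrbitPos, lt_iSup_iff] at hlt
    obtain ⟨⟨t, ht⟩, htbig⟩ := hlt
    rw [← enorm_eq_nnnorm, ← ofReal_norm] at htbig
    have hnorm_big : (n : ℝ) + 1 < ‖S t φs‖ := by
      by_contra h
      push_neg at h
      exact absurd (ENNReal.ofReal_le_ofReal h) (not_le.mpr htbig)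
    have ht0 : (0 : ℝ) < t := ht
    -- well-posedness near φ*
    obtain ⟨δ', hδ'pos, hδ'⟩ :=
      hS.2.2.2 (t + 1) (by linarith) φs (1 / 2) (by norm_num)
    -- find a point of A n close to φ*
    rcases Metric.mem_closure_iff.mp hφs_mem δ' hδ'pos with ⟨y, hyA, hy_close⟩
    have hy_close' : ‖φs - y‖ ≤ δ' := by
      rw [← dist_eq_norm]; exact le_of_lt hy_close
    have hdiff : ‖S t φs - S t y‖ ≤ 1 / 2 :=
      hδ' y hy_close' t ⟨by linarith, by linarith⟩
    have hy_big : (n : ℝ) + 1 / 2 < ‖S t y‖ := by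
      have := norm_sub_norm_le (S t φs) (S t y)
      linarith
    -- contradiction with y ∈ A n
    have : (n : ℝ≥0∞) < supOrbitPos S y := by
      calc (n : ℝ≥0∞) = ENNReal.ofReal (n : ℝ) := (ENNReal.ofReal_natCast n).symm
        _ < ENNReal.ofReal ((n : ℝ) + 1 / 2) :=
            ENNReal.ofReal_lt_ofReal_iff (by positivity) |>.mpr (by linarith)
        _ ≤ ENNReal.ofReal ‖S t y‖ := ENNReal.ofReal_le_ofReal (le_of_lt hy_big)
        _ = (‖S t y‖₊ : ℝ≥0∞) := (ofReal_norm _).trans (enorm_eq_nnnorm _)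
        _ ≤ supOrbitPos S y := le_iSup (fun τ : Set.Ioi (0:ℝ) => (‖S (τ:ℝ) y‖₊ : ℝ≥0∞)) ⟨t, ht⟩
    exact absurd hyA (by simpa [hA] using not_le.mpr this)
  -- boundedness set is covered by the A n
  have hcover : {φ : X | supOrbitPos S φ < ⊤} ⊆ ⋃ n : ℕ, A n := by
    intro φ hφ
    obtain ⟨n, hn⟩ := ENNReal.exists_nat_gt (ne_top_of_lt hφ)
    exact Set.mem_iUnion.mpr ⟨n, le_of_lt hn⟩
  have hmeagre : IsMeagre {φ : X | supOrbitPos S φ < ⊤} :=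
    isMeagre_iff_countable_union_isNowhereDense.mpr
      ⟨Set.range A, by rintro t ⟨n, rfl⟩; exact hND n, Set.countable_range A,
        by rwa [Set.sUnion_range]⟩
  have hcompl : {φ : X | supOrbitPos S φ = ⊤} = {φ : X | supOrbitPos S φ < ⊤}ᶜ := by
    ext φ
    simp [lt_top_iff_ne_top]
  have hres : {φ : X | supOrbitPos S φ = ⊤} ∈ residual X := by
    rw [hcompl]; exact hmeagre
  refine ⟨hmeagre, hres, ?_⟩
  have hdense : Dense {φ : X | supOrbitPos S φ = ⊤} := dense_of_mem_residual hres
  exact hdense.nonempty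

end
end

section
/- Let R ∈ {0} ∪ ℕ and let a be a solution on an interval I of the R-truncated system (respectively, of the FNLS system, or of the resonant system RFNLS). Then the mass Σ_{n∈ℤ²} |a_n(t)|² is finite and constant on I. -/
open scoped BigOperators ENNReal NNReal
open Complex

noncomputable section

section massAux
open MeasureTheory

theorem hasDeriv_normSq' {f : ℝ → ℂ} {D : ℂ} {s : Set ℝ} {x : ℝ}
    (h : HasDerivWithinAt f D s x) :
    HasDerivWithinAt (fun τ => ‖f τ‖ ^ 2) (2 * ((starRingEnd ℂ) (f x) * D).re) s x := by
  have hre : HasDerivWithinAt (fun τ => (f τ).re) (Complex.reCLM D) s x :=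
    Complex.reCLM.hasFDerivAt.comp_hasDerivWithinAt x h
  have him : HasDerivWithinAt (fun τ => (f τ).im) (Complex.imCLM D) s x :=
    Complex.imCLM.hasFDerivAt.comp_hasDerivWithinAt x h
  have key := (hre.mul hre).add (him.mul him)
  have heq : (fun τ => (f τ).re * (f τ).re + (f τ).im * (f τ).im) = fun τ => ‖f τ‖ ^ 2 := by
    funext τ
    rw [Complex.sq_norm, Complex.normSq_apply]
  simp only [Pi.mul_def, Pi.add_def] at key
  rw [heq] at key
  refine key.congr_deriv ?_
  simp only [Complex.reCLM_apply, Complex.imCLM_apply, Complex.mul_re, Complex.conj_re,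
    Complex.conj_im]
  ring

variable (Cond : Z2 × Z2 × Z2 → Z2 → Prop) [inst : ∀ p n, Decidable (Cond p n)]

def genRHS (c : Z2 → ℂ) (n : Z2) (t : ℝ) : ℂ :=
  Complex.I * (-((‖c n‖ : ℂ) ^ 2) * c n +
    ∑' p : Z2 × Z2 × Z2,
      if Cond p n then
        c p.1 * (starRingEnd ℂ) (c p.2.1) * c p.2.2 *
          Complex.exp (Complex.I * ((omega4 p.1 p.2.1 p.2.2 n : ℤ) : ℂ) * (t : ℂ))
      else 0)

def quadF (c : Z2 → ℂ) (t : ℝ) (x : Z2 × (Z2 × Z2 × Z2)) : ℂ :=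
  if Cond x.2 x.1 then
    (starRingEnd ℂ) (c x.1) *
      (c x.2.1 * (starRingEnd ℂ) (c x.2.2.1) * c x.2.2.2 *
        Complex.exp (Complex.I * ((omega4 x.2.1 x.2.2.1 x.2.2.2 x.1 : ℤ) : ℂ) * (t : ℂ)))
  else 0

def invo : (Z2 × (Z2 × Z2 × Z2)) ≃ (Z2 × (Z2 × Z2 × Z2)) where
  toFun x := (x.2.2.2, (x.2.2.1, x.2.1, x.1))
  invFun x := (x.2.2.2, (x.2.2.1, x.2.1, x.1))
  left_inv _ := rfl
  right_inv _ := rfl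

theorem quadF_invo (hInv : ∀ p n, Cond p n → Cond (p.2.1, p.1, n) p.2.2)
    (c : Z2 → ℂ) (t : ℝ) (x : Z2 × (Z2 × Z2 × Z2)) :
    quadF Cond c t (invo x) = (starRingEnd ℂ) (quadF Cond c t x) := by
  obtain ⟨n, p1, p2, p3⟩ := x
  by_cases h : Cond (p1, p2, p3) n
  · have h' : Cond (p2, p1, n) p3 := hInv _ _ h
    show quadF Cond c t (p3, (p2, p1, n)) = _
    simp only [quadF, invo, Equiv.coe_fn_mk, if_pos h, if_pos h']
    have hw : ((omega4 p2 p1 n p3 : ℤ) : ℂ) = -((omega4 p1 p2 p3 n : ℤ) : ℂ) := by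
      push_cast [omega4, sq2]; ring
    rw [hw]
    rw [map_mul, map_mul, map_mul, map_mul, ← Complex.exp_conj]
    have hcc : (starRingEnd ℂ) (Complex.I * ((omega4 p1 p2 p3 n : ℤ) : ℂ) * (t : ℂ))
        = Complex.I * (-((omega4 p1 p2 p3 n : ℤ) : ℂ)) * (t : ℂ) := by
      rw [map_mul, map_mul, Complex.conj_I, Complex.conj_ofReal]
      rw [show (starRingEnd ℂ) ((omega4 p1 p2 p3 n : ℤ) : ℂ) = ((omega4 p1 p2 p3 n : ℤ) : ℂ) from
        map_intCast _ _]
      ring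
    rw [hcc]
    rw [Complex.conj_conj, Complex.conj_conj]
    ring
  · have h'' : ¬ Cond (p2, p1, n) p3 := fun h' => h (hInv _ _ h')
    show quadF Cond c t (p3, (p2, p1, n)) = _
    simp only [quadF, invo, Equiv.coe_fn_mk, if_neg h, if_neg h'', map_zero]

theorem summable3 {c : Z2 → ℂ} (hc : Summable fun n : Z2 => ‖c n‖) :
    Summable fun p : Z2 × Z2 × Z2 => ‖c p.1‖ * (‖c p.2.1‖ * ‖c p.2.2‖) :=
  hc.mul_of_nonneg (hc.mul_of_nonneg hc (fun _ => norm_nonneg _) fun _ => norm_nonneg _)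
    (fun _ => norm_nonneg _) fun _ => mul_nonneg (norm_nonneg _) (norm_nonneg _)

theorem tsum3 {c : Z2 → ℂ} (hc : Summable fun n : Z2 => ‖c n‖) :
    (∑' p : Z2 × Z2 × Z2, ‖c p.1‖ * (‖c p.2.1‖ * ‖c p.2.2‖))
    = (∑' n : Z2, ‖c n‖) ^ 3 := by
  have hn : Summable fun n : Z2 => ‖(‖c n‖ : ℝ)‖ := by simpa using hc
  have h2 : Summable fun p : Z2 × Z2 => ‖(‖c p.1‖ * ‖c p.2‖ : ℝ)‖ := by
    simpa [abs_mul, _root_.abs_of_nonneg (norm_nonneg _)] using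
      hc.mul_of_nonneg hc (fun _ => norm_nonneg _) fun _ => norm_nonneg _
  have h1 := tsum_mul_tsum_of_summable_norm (R := ℝ) hn h2
  have h0 := tsum_mul_tsum_of_summable_norm (R := ℝ) hn hn
  rw [← h1, ← h0]; ring

theorem summable4 {c : Z2 → ℂ} (hc : Summable fun n : Z2 => ‖c n‖) :
    Summable fun x : Z2 × (Z2 × Z2 × Z2) =>
    ‖c x.1‖ * (‖c x.2.1‖ * (‖c x.2.2.1‖ * ‖c x.2.2.2‖)) :=
  hc.mul_of_nonneg
    (hc.mul_of_nonneg (hc.mul_of_nonneg hc (fun _ => norm_nonneg _) fun _ => norm_nonneg _)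
      (fun _ => norm_nonneg _) fun _ => mul_nonneg (norm_nonneg _) (norm_nonneg _))
    (fun _ => norm_nonneg _)
    fun _ => mul_nonneg (norm_nonneg _) (mul_nonneg (norm_nonneg _) (norm_nonneg _))

theorem norm_exp_omega (w : ℤ) (t : ℝ) :
    ‖Complex.exp (Complex.I * (w : ℂ) * (t : ℂ))‖ = 1 := by
  rw [Complex.norm_exp]
  have : (Complex.I * (w : ℂ) * (t : ℂ)).re = 0 := by
    simp [Complex.mul_re, Complex.mul_im]
  rw [this, Real.exp_zero]

theorem norm_term_le {c : Z2 → ℂ} (t : ℝ) (n : Z2) (p : Z2 × Z2 × Z2) :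
    ‖(if Cond p n then
        c p.1 * (starRingEnd ℂ) (c p.2.1) * c p.2.2 *
          Complex.exp (Complex.I * ((omega4 p.1 p.2.1 p.2.2 n : ℤ) : ℂ) * (t : ℂ))
      else 0)‖ ≤ ‖c p.1‖ * (‖c p.2.1‖ * ‖c p.2.2‖) := by
  split_ifs with h
  · rw [norm_mul, norm_mul, norm_mul, norm_exp_omega, mul_one,
      show ‖(starRingEnd ℂ) (c p.2.1)‖ = ‖c p.2.1‖ from RCLike.norm_conj _]
    exact le_of_eq (by ring)
  · rw [norm_zero]
    exact mul_nonneg (norm_nonneg _) (mul_nonneg (norm_nonneg _) (norm_nonneg _))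

theorem norm_quadF_le {c : Z2 → ℂ} (t : ℝ) (x : Z2 × (Z2 × Z2 × Z2)) :
    ‖quadF Cond c t x‖ ≤ ‖c x.1‖ * (‖c x.2.1‖ * (‖c x.2.2.1‖ * ‖c x.2.2.2‖)) := by
  unfold quadF
  split_ifs with h
  · rw [norm_mul, norm_mul, norm_mul, norm_mul, norm_exp_omega, mul_one,
      show ‖(starRingEnd ℂ) (c x.1)‖ = ‖c x.1‖ from RCLike.norm_conj _,
      show ‖(starRingEnd ℂ) (c x.2.2.1)‖ = ‖c x.2.2.1‖ from RCLike.norm_conj _]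
    exact le_of_eq (by ring)
  · rw [norm_zero]
    exact mul_nonneg (norm_nonneg _)
      (mul_nonneg (norm_nonneg _) (mul_nonneg (norm_nonneg _) (norm_nonneg _)))

theorem summable_quadF {c : Z2 → ℂ} (hc : Summable fun n : Z2 => ‖c n‖) (t : ℝ) :
    Summable (quadF Cond c t) :=
  (summable4 hc).of_norm_bounded (norm_quadF_le Cond t)

theorem norm_genRHS_le {c : Z2 → ℂ} (hc : Summable fun n : Z2 => ‖c n‖) (n : Z2) (t : ℝ) :
    ‖genRHS Cond c n t‖ ≤ 2 * (∑' m : Z2, ‖c m‖) ^ 3 := by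
  set C := ∑' m : Z2, ‖c m‖ with hCdef
  have hcC : ∀ m, ‖c m‖ ≤ C := fun m => hc.le_tsum m fun _ _ => norm_nonneg _
  have hC0 : 0 ≤ C := tsum_nonneg fun _ => norm_nonneg _
  have hsumT : Summable fun p : Z2 × Z2 × Z2 =>
      ‖(if Cond p n then
        c p.1 * (starRingEnd ℂ) (c p.2.1) * c p.2.2 *
          Complex.exp (Complex.I * ((omega4 p.1 p.2.1 p.2.2 n : ℤ) : ℂ) * (t : ℂ))
      else 0)‖ :=
    (summable3 hc).of_nonneg_of_le (fun _ => norm_nonneg _) (norm_term_le Cond t n)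
  have hT : ‖∑' p : Z2 × Z2 × Z2,
      (if Cond p n then
        c p.1 * (starRingEnd ℂ) (c p.2.1) * c p.2.2 *
          Complex.exp (Complex.I * ((omega4 p.1 p.2.1 p.2.2 n : ℤ) : ℂ) * (t : ℂ))
      else 0)‖ ≤ C ^ 3 := by
    refine le_trans (norm_tsum_le_tsum_norm hsumT) ?_
    rw [← tsum3 hc]
    exact Summable.tsum_le_tsum (norm_term_le Cond t n) hsumT (summable3 hc)
  unfold genRHS
  rw [norm_mul, Complex.norm_I, one_mul]
  refine le_trans (norm_add_le _ _) ?_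
  have h1 : ‖-((‖c n‖ : ℂ) ^ 2) * c n‖ ≤ C ^ 3 := by
    rw [norm_mul, norm_neg, norm_pow, Complex.norm_real, norm_norm]
    calc ‖c n‖ ^ 2 * ‖c n‖ ≤ C ^ 2 * C := by
          exact mul_le_mul (pow_le_pow_left₀ (norm_nonneg _) (hcC n) 2) (hcC n) (norm_nonneg _)
            (pow_nonneg hC0 2)
      _ = C ^ 3 := by ring
  linarith

theorem sum_cancel (hInv : ∀ p n, Cond p n → Cond (p.2.1, p.1, n) p.2.2)
    {c : Z2 → ℂ} (hc : Summable fun n : Z2 => ‖c n‖) (t : ℝ) :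
    (∑' n : Z2, 2 * ((starRingEnd ℂ) (c n) * genRHS Cond c n t).re) = 0 := by
  set C := ∑' m : Z2, ‖c m‖ with hCdef
  have hcC : ∀ m, ‖c m‖ ≤ C := fun m => hc.le_tsum m fun _ _ => norm_nonneg _
  have hC0 : 0 ≤ C := tsum_nonneg fun _ => norm_nonneg _
  have hF : Summable (quadF Cond c t) := summable_quadF Cond hc t
  -- row decomposition
  have hT : ∀ n : Z2, (starRingEnd ℂ) (c n) * genRHS Cond c n t
      = Complex.I * (-((‖c n‖ : ℂ) ^ 4) + ∑' p : Z2 × Z2 × Z2, quadF Cond c t (n, p)) := by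
    intro n
    unfold genRHS quadF
    have hrow : (starRingEnd ℂ) (c n) * (∑' p : Z2 × Z2 × Z2,
        if Cond p n then
          c p.1 * (starRingEnd ℂ) (c p.2.1) * c p.2.2 *
            Complex.exp (Complex.I * ((omega4 p.1 p.2.1 p.2.2 n : ℤ) : ℂ) * (t : ℂ))
        else 0)
        = ∑' p : Z2 × Z2 × Z2,
          (if Cond p n then
            (starRingEnd ℂ) (c n) *
              (c p.1 * (starRingEnd ℂ) (c p.2.1) * c p.2.2 *
                Complex.exp (Complex.I * ((omega4 p.1 p.2.1 p.2.2 n : ℤ) : ℂ) * (t : ℂ)))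
          else 0) := by
      rw [← tsum_mul_left]
      exact tsum_congr fun p => by split_ifs <;> simp
    have hsq : (starRingEnd ℂ) (c n) * (-((‖c n‖ : ℂ) ^ 2) * c n) = -((‖c n‖ : ℂ) ^ 4) := by
      have h1 : (c n) * (starRingEnd ℂ) (c n) = ((‖c n‖ ^ 2 : ℝ) : ℂ) := by
        rw [Complex.mul_conj, Complex.normSq_eq_norm_sq]
      calc (starRingEnd ℂ) (c n) * (-((‖c n‖ : ℂ) ^ 2) * c n)
          = -((‖c n‖ : ℂ) ^ 2) * ((c n) * (starRingEnd ℂ) (c n)) := by ring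
        _ = -((‖c n‖ : ℂ) ^ 2) * ((‖c n‖ ^ 2 : ℝ) : ℂ) := by rw [h1]
        _ = -((‖c n‖ : ℂ) ^ 4) := by push_cast; ring_nf
    rw [show ∀ X T : ℂ, (starRingEnd ℂ) (c n) * (Complex.I * (X + T))
        = Complex.I * ((starRingEnd ℂ) (c n) * X + (starRingEnd ℂ) (c n) * T) from
      fun X T => by ring]
    rw [hsq, hrow]
  -- summability of the row sums and the quartic part
  have hA : Summable fun n : Z2 => -((‖c n‖ : ℂ) ^ 4) := by
    refine Summable.of_norm_bounded (hc.mul_left (C ^ 3)) fun n => ?_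
    rw [norm_neg, norm_pow, Complex.norm_real, norm_norm]
    calc ‖c n‖ ^ 4 = ‖c n‖ ^ 3 * ‖c n‖ := by ring
      _ ≤ C ^ 3 * ‖c n‖ := by
          exact mul_le_mul_of_nonneg_right (pow_le_pow_left₀ (norm_nonneg _) (hcC n) 3)
            (norm_nonneg _)
  have hB : Summable fun n : Z2 => ∑' p : Z2 × Z2 × Z2, quadF Cond c t (n, p) :=
    (hF.hasSum.prod_fiberwise fun n => (hF.prod_factor n).hasSum).summable
  have hAB : Summable fun n : Z2 =>
      -((‖c n‖ : ℂ) ^ 4) + ∑' p : Z2 × Z2 × Z2, quadF Cond c t (n, p) := hA.add hB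
  have hG : Summable fun n : Z2 => (starRingEnd ℂ) (c n) * genRHS Cond c n t := by
    refine Summable.of_norm_bounded hAB.norm fun n => ?_
    rw [hT n, norm_mul, Complex.norm_I, one_mul]
  -- the total quadruple sum has zero imaginary part
  have hIm : (∑' x, quadF Cond c t x).im = 0 := by
    have h2 : (∑' x, quadF Cond c t x).im = ∑' x, (quadF Cond c t x).im :=
      Complex.imCLM.map_tsum hF
    have hFim : Summable fun x => (quadF Cond c t x).im :=
      hF.map (Complex.imCLM : ℂ →L[ℝ] ℝ).toLinearMap.toAddMonoidHom Complex.continuous_im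
    have h3 : ∑' x, (quadF Cond c t x).im = - ∑' x, (quadF Cond c t x).im := by
      calc ∑' x, (quadF Cond c t x).im = ∑' x, (quadF Cond c t (invo x)).im :=
            ((invo).tsum_eq fun x => (quadF Cond c t x).im).symm
        _ = ∑' x, - (quadF Cond c t x).im := by
            refine tsum_congr fun x => ?_
            rw [quadF_invo Cond hInv c t x, Complex.conj_im]
        _ = - ∑' x, (quadF Cond c t x).im := by rw [tsum_neg]
    rw [h2]
    linarith
  -- conclusion
  have key : (∑' n : Z2, (starRingEnd ℂ) (c n) * genRHS Cond c n t).re = 0 := by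
    have e1 : ∑' n : Z2, (starRingEnd ℂ) (c n) * genRHS Cond c n t
        = Complex.I * ∑' n : Z2,
            (-((‖c n‖ : ℂ) ^ 4) + ∑' p : Z2 × Z2 × Z2, quadF Cond c t (n, p)) := by
      rw [← tsum_mul_left]
      exact tsum_congr hT
    rw [e1, Complex.mul_re, Complex.I_re, Complex.I_im, zero_mul, one_mul, zero_sub, neg_eq_zero]
    have e2 : (∑' n : Z2,
        (-((‖c n‖ : ℂ) ^ 4) + ∑' p : Z2 × Z2 × Z2, quadF Cond c t (n, p))).im
        = ∑' n : Z2,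
          (-((‖c n‖ : ℂ) ^ 4) + ∑' p : Z2 × Z2 × Z2, quadF Cond c t (n, p)).im :=
      Complex.imCLM.map_tsum hAB
    rw [e2]
    have e3 : ∀ n : Z2,
        (-((‖c n‖ : ℂ) ^ 4) + ∑' p : Z2 × Z2 × Z2, quadF Cond c t (n, p)).im
        = (∑' p : Z2 × Z2 × Z2, quadF Cond c t (n, p)).im := by
      intro n
      rw [Complex.add_im]
      have : (-((‖c n‖ : ℂ) ^ 4)).im = 0 := by
        simp [← Complex.ofReal_pow]
      rw [this, zero_add]
    rw [tsum_congr e3]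
    have e4 : ∑' n : Z2, (∑' p : Z2 × Z2 × Z2, quadF Cond c t (n, p)).im
        = (∑' x, quadF Cond c t x).im := by
      have h5 : ∀ n : Z2, (∑' p : Z2 × Z2 × Z2, quadF Cond c t (n, p)).im
          = ∑' p : Z2 × Z2 × Z2, (quadF Cond c t (n, p)).im := fun n =>
        Complex.imCLM.map_tsum (hF.prod_factor n)
      rw [tsum_congr h5]
      have h6 : (∑' x, quadF Cond c t x).im = ∑' x, (quadF Cond c t x).im :=
        Complex.imCLM.map_tsum hF
      rw [h6]
      have hFim : Summable fun x => (quadF Cond c t x).im :=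
        hF.map (Complex.imCLM : ℂ →L[ℝ] ℝ).toLinearMap.toAddMonoidHom Complex.continuous_im
      exact (Summable.tsum_prod' hFim fun n => hFim.prod_factor n).symm
    rw [e4, hIm]
  have efin : ∑' n : Z2, 2 * ((starRingEnd ℂ) (c n) * genRHS Cond c n t).re
      = 2 * (∑' n : Z2, (starRingEnd ℂ) (c n) * genRHS Cond c n t).re := by
    rw [tsum_mul_left]
    congr 1
    exact (Complex.reCLM.map_tsum hG).symm
  rw [efin, key, mul_zero]


theorem mass_conserved_gen (hInv : ∀ p n, Cond p n → Cond (p.2.1, p.1, n) p.2.2)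
    (I : Set ℝ) (hI : I.OrdConnected) (a : ℝ → Z2 → ℂ)
    (hsum : ∀ t ∈ I, Summable fun n : Z2 => ‖a t n‖)
    (hbd : ∀ t1 ∈ I, ∀ t2 ∈ I, ∃ C : ℝ, ∀ t ∈ Set.Icc t1 t2 ∩ I, (∑' n : Z2, ‖a t n‖) ≤ C)
    (hderiv : ∀ n : Z2, ∀ t ∈ I, HasDerivWithinAt (fun τ => a τ n) (genRHS Cond (a t) n t) I t) :
    (∀ t ∈ I, Summable fun n : Z2 => ‖a t n‖ ^ 2) ∧
    (∀ t1 ∈ I, ∀ t2 ∈ I, (∑' n : Z2, ‖a t1 n‖ ^ 2) = ∑' n : Z2, ‖a t2 n‖ ^ 2) := by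
  have part1 : ∀ t ∈ I, Summable fun n : Z2 => ‖a t n‖ ^ 2 := by
    intro t ht
    refine Summable.of_nonneg_of_le (fun n => sq_nonneg _) (fun n => ?_)
      ((hsum t ht).mul_left (∑' m : Z2, ‖a t m‖))
    have h1 : ‖a t n‖ ≤ ∑' m : Z2, ‖a t m‖ :=
      (hsum t ht).le_tsum n fun _ _ => norm_nonneg _
    calc ‖a t n‖ ^ 2 = ‖a t n‖ * ‖a t n‖ := sq (‖a t n‖) ▸ by ring
      _ ≤ (∑' m : Z2, ‖a t m‖) * ‖a t n‖ :=
          mul_le_mul_of_nonneg_right h1 (norm_nonneg _)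
  refine ⟨part1, ?_⟩
  have key : ∀ s ∈ I, ∀ t ∈ I, s ≤ t →
      (∑' n : Z2, ‖a s n‖ ^ 2) = ∑' n : Z2, ‖a t n‖ ^ 2 := by
    intro s hs t ht hst
    have hIcc : Set.Icc s t ⊆ I := hI.out hs ht
    obtain ⟨C, hC⟩ := hbd s hs t ht
    have hC' : ∀ τ ∈ Set.Icc s t, (∑' n : Z2, ‖a τ n‖) ≤ C := fun τ hτ => hC τ ⟨hτ, hIcc hτ⟩
    have hC0 : 0 ≤ C :=
      le_trans (tsum_nonneg fun _ => norm_nonneg _) (hC' s ⟨le_rfl, hst⟩)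
    set f : Z2 → ℝ → ℝ :=
      fun n τ => 2 * ((starRingEnd ℂ) (a τ n) * genRHS Cond (a τ) n τ).re with hfdef
    set g : Z2 → ℝ → ℝ := fun n τ => ‖a τ n‖ ^ 2 with hgdef
    have hcont : ∀ n : Z2, ContinuousOn (fun τ => a τ n) (Set.Icc s t) := fun n τ hτ =>
      ((hderiv n τ (hIcc hτ)).continuousWithinAt).mono hIcc
    have hgcont : ∀ n : Z2, ContinuousOn (g n) (Set.Icc s t) := fun n =>
      ((hcont n).norm.pow 2)
    have hderiv' : ∀ n : Z2, ∀ τ ∈ Set.Ioo s t, HasDerivAt (g n) (f n τ) τ := by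
      intro n τ hτ
      have h1 : HasDerivWithinAt (fun τ' => a τ' n) (genRHS Cond (a τ) n τ) I τ :=
        hderiv n τ (hIcc ⟨le_of_lt hτ.1, le_of_lt hτ.2⟩)
      have h2 := hasDeriv_normSq' h1
      have hnhds : I ∈ nhds τ :=
        Filter.mem_of_superset (Ioo_mem_nhds hτ.1 hτ.2)
          (subset_trans Set.Ioo_subset_Icc_self hIcc)
      exact h2.hasDerivAt hnhds
    have hfb : ∀ n : Z2, ∀ τ ∈ Set.Icc s t, |f n τ| ≤ 4 * C ^ 3 * ‖a τ n‖ := by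
      intro n τ hτ
      have hsumτ : Summable fun m : Z2 => ‖a τ m‖ := hsum τ (hIcc hτ)
      have h1 : |f n τ| ≤ 2 * (‖a τ n‖ * ‖genRHS Cond (a τ) n τ‖) := by
        rw [hfdef]
        dsimp only
        rw [abs_mul, _root_.abs_two]
        refine mul_le_mul_of_nonneg_left ?_ (by norm_num)
        refine le_trans (Complex.abs_re_le_norm _) ?_
        rw [norm_mul,
          show ‖(starRingEnd ℂ) (a τ n)‖ = ‖a τ n‖ from RCLike.norm_conj _]
      have h2 : ‖genRHS Cond (a τ) n τ‖ ≤ 2 * C ^ 3 := by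
        refine le_trans (norm_genRHS_le Cond hsumτ n τ) ?_
        refine mul_le_mul_of_nonneg_left ?_ (by norm_num)
        exact pow_le_pow_left₀ (tsum_nonneg fun _ => norm_nonneg _) (hC' τ hτ) 3
      calc |f n τ| ≤ 2 * (‖a τ n‖ * ‖genRHS Cond (a τ) n τ‖) := h1
        _ ≤ 2 * (‖a τ n‖ * (2 * C ^ 3)) :=
            mul_le_mul_of_nonneg_left
              (mul_le_mul_of_nonneg_left h2 (norm_nonneg _)) (by norm_num)
        _ = 4 * C ^ 3 * ‖a τ n‖ := by ring
    -- measurability on Ioo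
    have hfae : ∀ n : Z2, ∀ᵐ τ ∂(volume.restrict (Set.Ioo s t)), f n τ = deriv (g n) τ := by
      intro n
      refine (ae_restrict_iff' measurableSet_Ioo).2 (Filter.Eventually.of_forall ?_)
      intro τ hτ
      exact ((hderiv' n τ hτ).deriv).symm
    have hmeas : ∀ n : Z2, AEStronglyMeasurable (f n) (volume.restrict (Set.Ioo s t)) := by
      intro n
      exact ((measurable_deriv (g n)).aestronglyMeasurable).congr
        ((hfae n).mono fun τ hτ => hτ.symm)
    have hanorm_meas : ∀ n : Z2,
        AEMeasurable (fun τ => ‖a τ n‖) (volume.restrict (Set.Ioo s t)) := by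
      intro n
      exact ((hcont n).mono Set.Ioo_subset_Icc_self).norm.aemeasurable (μ := volume)
        measurableSet_Ioo
    -- interval integrability
    have hint : ∀ n : Z2, IntervalIntegrable (f n) volume s t := by
      intro n
      rw [intervalIntegrable_iff_integrableOn_Ioo_of_le hst]
      refine ⟨hmeas n, ?_⟩
      refine HasFiniteIntegral.of_bounded (C := 4 * C ^ 3 * C) ?_
      refine (ae_restrict_iff' measurableSet_Ioo).2 (Filter.Eventually.of_forall ?_)
      intro τ hτ
      have h1 := hfb n τ (Set.Ioo_subset_Icc_self hτ)
      have h2 : ‖a τ n‖ ≤ C := by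
        refine le_trans (Summable.le_tsum (hsum τ (hIcc (Set.Ioo_subset_Icc_self hτ))) n
          fun _ _ => norm_nonneg _) (hC' τ (Set.Ioo_subset_Icc_self hτ))
      have h3 : 0 ≤ 4 * C ^ 3 := by positivity
      calc ‖f n τ‖ = |f n τ| := rfl
        _ ≤ 4 * C ^ 3 * ‖a τ n‖ := h1
        _ ≤ 4 * C ^ 3 * C := mul_le_mul_of_nonneg_left h2 h3
    -- FTC for each coordinate
    have hFTC : ∀ n : Z2, (∫ τ in s..t, f n τ) = g n t - g n s := by
      intro n
      exact intervalIntegral.integral_eq_sub_of_hasDeriv_right_of_le hst (hgcont n)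
        (fun τ hτ => ((hderiv' n τ hτ).hasDerivWithinAt)) (hint n)
    -- finiteness of the double (l)integral
    have hlint : (∑' n : Z2, ∫⁻ τ, ‖f n τ‖₊ ∂(volume.restrict (Set.Ioo s t))) ≠ ⊤ := by
      have hb1 : ∀ n : Z2, (∫⁻ τ, ‖f n τ‖₊ ∂(volume.restrict (Set.Ioo s t)))
          ≤ ∫⁻ τ, ENNReal.ofReal (4 * C ^ 3 * ‖a τ n‖) ∂(volume.restrict (Set.Ioo s t)) := by
        intro n
        refine lintegral_mono_ae ?_
        refine (ae_restrict_iff' measurableSet_Ioo).2 (Filter.Eventually.of_forall ?_)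
        intro τ hτ
        rw [← enorm_eq_nnnorm, ← ofReal_norm]
        exact ENNReal.ofReal_le_ofReal (hfb n τ (Set.Ioo_subset_Icc_self hτ))
      have hb2 : (∑' n : Z2, ∫⁻ τ, ENNReal.ofReal (4 * C ^ 3 * ‖a τ n‖)
          ∂(volume.restrict (Set.Ioo s t))) ≠ ⊤ := by
        rw [← lintegral_tsum fun n => ((hanorm_meas n).const_mul (4 * C ^ 3)).ennreal_ofReal]
        have hptbd : ∀ᵐ τ ∂(volume.restrict (Set.Ioo s t)),
            (∑' n : Z2, ENNReal.ofReal (4 * C ^ 3 * ‖a τ n‖))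
              ≤ ENNReal.ofReal (4 * C ^ 3 * C) := by
          refine (ae_restrict_iff' measurableSet_Ioo).2 (Filter.Eventually.of_forall ?_)
          intro τ hτ
          have hsumτ : Summable fun m : Z2 => ‖a τ m‖ := hsum τ (hIcc (Set.Ioo_subset_Icc_self hτ))
          have e1 : (∑' n : Z2, ENNReal.ofReal (4 * C ^ 3 * ‖a τ n‖))
              = ENNReal.ofReal (∑' n : Z2, 4 * C ^ 3 * ‖a τ n‖) :=
            (ENNReal.ofReal_tsum_of_nonneg (fun n => by positivity)
              (hsumτ.mul_left _)).symm
          rw [e1]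
          refine ENNReal.ofReal_le_ofReal ?_
          rw [tsum_mul_left]
          have := hC' τ (Set.Ioo_subset_Icc_self hτ)
          have h3 : 0 ≤ 4 * C ^ 3 := by positivity
          exact mul_le_mul_of_nonneg_left this h3
        have := lintegral_mono_ae hptbd
        rw [lintegral_const] at this
        refine ne_top_of_le_ne_top ?_ this
        rw [Measure.restrict_apply_univ]
        exact ENNReal.mul_ne_top ENNReal.ofReal_ne_top
          (by simp [Real.volume_Ioo])
      exact ne_top_of_le_ne_top hb2 (ENNReal.tsum_le_tsum hb1)
    -- swap sum and integral
    have hswap : (∫ τ in Set.Ioo s t, (∑' n : Z2, f n τ))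
        = ∑' n : Z2, ∫ τ in Set.Ioo s t, f n τ :=
      integral_tsum hmeas hlint
    -- pointwise cancellation
    have hzero : ∀ τ ∈ Set.Ioo s t, (∑' n : Z2, f n τ) = 0 := by
      intro τ hτ
      exact sum_cancel Cond hInv (hsum τ (hIcc (Set.Ioo_subset_Icc_self hτ))) τ
    have hintzero : (∫ τ in Set.Ioo s t, (∑' n : Z2, f n τ)) = 0 := by
      rw [setIntegral_congr_fun measurableSet_Ioo hzero]
      simp
    -- sum up the FTC identities
    have hsumFTC : (∑' n : Z2, (g n t - g n s)) = 0 := by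
      have e1 : ∀ n : Z2, g n t - g n s = ∫ τ in Set.Ioo s t, f n τ := by
        intro n
        rw [← hFTC n, intervalIntegral.integral_of_le hst, integral_Ioc_eq_integral_Ioo]
      rw [tsum_congr e1, ← hswap, hintzero]
    have hgs : Summable fun n : Z2 => g n s := part1 s hs
    have hgt : Summable fun n : Z2 => g n t := part1 t ht
    have : (∑' n : Z2, g n t) - (∑' n : Z2, g n s) = 0 := by
      rw [← (hgt.hasSum.sub hgs.hasSum).tsum_eq]
      exact hsumFTC
    have := sub_eq_zero.1 this
    exact this.symm
  intro t1 ht1 t2 ht2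
  rcases le_total t1 t2 with h | h
  · exact key t1 ht1 t2 ht2 h
  · exact (key t2 ht2 t1 ht1 h).symm


/-- The three conditions. -/
def CondF (p : Z2 × Z2 × Z2) (n : Z2) : Prop :=
  p.1 - p.2.1 + p.2.2 = n ∧ p.1 ≠ n ∧ p.2.2 ≠ n

instance : ∀ p n, Decidable (CondF p n) := fun p n =>
  decidable_of_iff (p.1 - p.2.1 + p.2.2 = n ∧ p.1 ≠ n ∧ p.2.2 ≠ n) Iff.rfl

def CondT (R : ℕ) (p : Z2 × Z2 × Z2) (n : Z2) : Prop :=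
  p.1 - p.2.1 + p.2.2 = n ∧ p.1 ≠ n ∧ p.2.2 ≠ n ∧ |omega4 p.1 p.2.1 p.2.2 n| ≤ (R : ℤ)

instance (R : ℕ) : ∀ p n, Decidable (CondT R p n) := fun p n =>
  decidable_of_iff (p.1 - p.2.1 + p.2.2 = n ∧ p.1 ≠ n ∧ p.2.2 ≠ n ∧
    |omega4 p.1 p.2.1 p.2.2 n| ≤ (R : ℤ)) Iff.rfl

def CondR (p : Z2 × Z2 × Z2) (n : Z2) : Prop :=
  p.1 - p.2.1 + p.2.2 = n ∧ p.1 ≠ n ∧ p.2.2 ≠ n ∧ omega4 p.1 p.2.1 p.2.2 n = 0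

instance : ∀ p n, Decidable (CondR p n) := fun p n =>
  decidable_of_iff (p.1 - p.2.1 + p.2.2 = n ∧ p.1 ≠ n ∧ p.2.2 ≠ n ∧
    omega4 p.1 p.2.1 p.2.2 n = 0) Iff.rfl

theorem omega4_swap (p1 p2 p3 n : Z2) : omega4 p2 p1 n p3 = -omega4 p1 p2 p3 n := by
  unfold omega4 sq2; ring

theorem base_inv {p : Z2 × Z2 × Z2} {n : Z2}
    (h : p.1 - p.2.1 + p.2.2 = n ∧ p.1 ≠ n ∧ p.2.2 ≠ n) :
    p.2.1 - p.1 + n = p.2.2 ∧ p.2.1 ≠ p.2.2 ∧ n ≠ p.2.2 := by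
  obtain ⟨h1, h2, h3⟩ := h
  refine ⟨by rw [← h1]; abel, ?_, Ne.symm h3⟩
  intro he
  exact h2 (by rw [← h1, he]; abel)

theorem condF_inv : ∀ p n, CondF p n → CondF (p.2.1, p.1, n) p.2.2 := by
  intro p n h
  exact base_inv h

theorem condT_inv (R : ℕ) : ∀ p n, CondT R p n → CondT R (p.2.1, p.1, n) p.2.2 := by
  intro p n h
  obtain ⟨h1, h2, h3, h4⟩ := h
  obtain ⟨g1, g2, g3⟩ := base_inv ⟨h1, h2, h3⟩
  refine ⟨g1, g2, g3, ?_⟩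
  show |omega4 p.2.1 p.1 n p.2.2| ≤ (R : ℤ)
  rw [omega4_swap, abs_neg]
  exact h4

theorem condR_inv : ∀ p n, CondR p n → CondR (p.2.1, p.1, n) p.2.2 := by
  intro p n h
  obtain ⟨h1, h2, h3, h4⟩ := h
  obtain ⟨g1, g2, g3⟩ := base_inv ⟨h1, h2, h3⟩
  refine ⟨g1, g2, g3, ?_⟩
  show omega4 p.2.1 p.1 n p.2.2 = 0
  rw [omega4_swap, h4, neg_zero]

theorem fnlsRHS_eq (a : Z2 → ℂ) (n : Z2) (t : ℝ) : fnlsRHS a n t = genRHS CondF a n t := by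
  unfold fnlsRHS genRHS
  congr 2
  refine tsum_congr fun p => ?_
  by_cases h : p.1 - p.2.1 + p.2.2 = n ∧ p.1 ≠ n ∧ p.2.2 ≠ n
  · rw [if_pos h, if_pos (show CondF p n from h)]
  · rw [if_neg h, if_neg (show ¬ CondF p n from h)]

theorem truncRHS_eq (R : ℕ) (a : Z2 → ℂ) (n : Z2) (t : ℝ) :
    truncRHS R a n t = genRHS (CondT R) a n t := by
  unfold truncRHS genRHS
  congr 2
  refine tsum_congr fun p => ?_
  by_cases h : p.1 - p.2.1 + p.2.2 = n ∧ p.1 ≠ n ∧ p.2.2 ≠ n ∧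
      |omega4 p.1 p.2.1 p.2.2 n| ≤ (R : ℤ)
  · rw [if_pos h, if_pos (show CondT R p n from h)]
  · rw [if_neg h, if_neg (show ¬ CondT R p n from h)]

theorem resRHS_eq (a : Z2 → ℂ) (n : Z2) (t : ℝ) : resRHS a n = genRHS CondR a n t := by
  unfold resRHS genRHS
  congr 2
  refine tsum_congr fun p => ?_
  by_cases h : p.1 - p.2.1 + p.2.2 = n ∧ p.1 ≠ n ∧ p.2.2 ≠ n ∧ omega4 p.1 p.2.1 p.2.2 n = 0
  · rw [if_pos h, if_pos (show CondR p n from h)]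
    rw [h.2.2.2]
    simp
  · rw [if_neg h, if_neg (show ¬ CondR p n from h)]

end massAux

/-- Conservation of mass: for any solution of the `R`-truncated
system, of FNLS, or of the resonant system RFNLS on an interval `I`, the mass
`Σ_n |a_n(t)|²` is finite and constant on `I`. -/
theorem mass_is_conserved
    (R : ℕ) (I : Set ℝ) (hI : I.OrdConnected) (a : ℝ → Z2 → ℂ)
    (h : IsTruncSolution R I a ∨ IsFNLSSolution I a ∨ IsRFNLSSolution I a) :
    (∀ t ∈ I, Summable fun n : Z2 => ‖a t n‖ ^ 2) ∧
    (∀ t1 ∈ I, ∀ t2 ∈ I, (∑' n : Z2, ‖a t1 n‖ ^ 2) = ∑' n : Z2, ‖a t2 n‖ ^ 2) := by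
  rcases h with hsol | hsol | hsol
  · obtain ⟨h1, h2, h3⟩ := hsol
    exact mass_conserved_gen (CondT R) (condT_inv R) I hI a h1 h2
      fun n t ht => by rw [← truncRHS_eq]; exact h3 n t ht
  · obtain ⟨h1, h2, h3⟩ := hsol
    exact mass_conserved_gen CondF condF_inv I hI a h1 h2
      fun n t ht => by rw [← fnlsRHS_eq]; exact h3 n t ht
  · obtain ⟨h1, h2, h3⟩ := hsol
    exact mass_conserved_gen CondR condR_inv I hI a h1 h2
      fun n t ht => by rw [← resRHS_eq (a t) n t]; exact h3 n t ht

end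
end

section
/- Let R ∈ {0} ∪ ℕ and let S ⊆ ℤ² satisfy the R-closure condition. If a is a solution of the R-truncated system on an interval I containing 0 and a_n(0) = 0 for every n ∉ S, then a_n(t) = 0 for every n ∉ S and every t ∈ I. -/
open scoped BigOperators ENNReal NNReal
open Complex

noncomputable section

private lemma summable_triple3 {u v w : Z2 → ℝ} (hu : Summable u) (hv : Summable v)
    (hw : Summable w) (hu0 : ∀ x, 0 ≤ u x) (hv0 : ∀ x, 0 ≤ v x) (hw0 : ∀ x, 0 ≤ w x) :
    Summable (fun p : Z2 × Z2 × Z2 => u p.1 * v p.2.1 * w p.2.2) := by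
  have h2 : Summable (fun q : Z2 × Z2 => v q.1 * w q.2) := hv.mul_of_nonneg hw hv0 hw0
  have h3 : Summable (fun p : Z2 × (Z2 × Z2) => u p.1 * (v p.2.1 * w p.2.2)) :=
    hu.mul_of_nonneg h2 hu0 (fun q => mul_nonneg (hv0 _) (hw0 _))
  exact h3.congr fun p => (mul_assoc _ _ _).symm

private lemma tsum_triple3 {u v w : Z2 → ℝ} (hu : Summable u) (hv : Summable v)
    (hw : Summable w) (hu0 : ∀ x, 0 ≤ u x) (hv0 : ∀ x, 0 ≤ v x) (hw0 : ∀ x, 0 ≤ w x) :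
    ∑' p : Z2 × Z2 × Z2, u p.1 * v p.2.1 * w p.2.2
      = (∑' x, u x) * (∑' x, v x) * (∑' x, w x) := by
  have h2 : Summable (fun q : Z2 × Z2 => v q.1 * w q.2) := hv.mul_of_nonneg hw hv0 hw0
  have h3 : Summable (fun p : Z2 × (Z2 × Z2) => u p.1 * (v p.2.1 * w p.2.2)) :=
    hu.mul_of_nonneg h2 hu0 (fun q => mul_nonneg (hv0 _) (hw0 _))
  have e2 : ((∑' x, v x) * ∑' x, w x) = ∑' q : Z2 × Z2, v q.1 * w q.2 :=
    Summable.tsum_mul_tsum hv hw h2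
  have e3 : ((∑' x, u x) * ∑' q : Z2 × Z2, v q.1 * w q.2)
      = ∑' p : Z2 × (Z2 × Z2), u p.1 * (v p.2.1 * w p.2.2) := Summable.tsum_mul_tsum hu h2 h3
  calc ∑' p : Z2 × Z2 × Z2, u p.1 * v p.2.1 * w p.2.2
      = ∑' p : Z2 × (Z2 × Z2), u p.1 * (v p.2.1 * w p.2.2) :=
        tsum_congr fun p => mul_assoc _ _ _
    _ = (∑' x, u x) * ∑' q : Z2 × Z2, v q.1 * w q.2 := e3.symm
    _ = (∑' x, u x) * ((∑' x, v x) * (∑' x, w x)) := by rw [e2]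
    _ = _ := (mul_assoc _ _ _).symm

set_option maxHeartbeats 2000000 in
/-- If `S ⊆ ℤ²` satisfies the `R`-closure condition and `a` is a
solution of the `R`-truncated system on an interval `I ∋ 0` with initial data
supported in `S`, then `a(t)` is supported in `S` for all `t ∈ I`. -/
theorem trunc_support_preserved
    (R : ℕ) (S : Set Z2) (hS : RClosed R S)
    (I : Set ℝ) (hI : I.OrdConnected) (h0I : (0 : ℝ) ∈ I)
    (a : ℝ → Z2 → ℂ) (ha : IsTruncSolution R I a)
    (hinit : ∀ n : Z2, n ∉ S → a 0 n = 0) :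
    ∀ t ∈ I, ∀ n : Z2, n ∉ S → a t n = 0 := by
  classical
  obtain ⟨hsum, hbd, hderiv⟩ := ha
  intro t htI
  have hJI : Set.uIcc (0:ℝ) t ⊆ I := hI.uIcc_subset h0I htI
  have htJ : t ∈ Set.uIcc (0:ℝ) t := Set.right_mem_uIcc
  have h0J : (0:ℝ) ∈ Set.uIcc (0:ℝ) t := Set.left_mem_uIcc
  obtain ⟨C, hC⟩ : ∃ C, ∀ τ ∈ Set.uIcc (0:ℝ) t, (∑' m : Z2, ‖a τ m‖) ≤ C := by
    rcases le_total (0:ℝ) t with h | h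
    · obtain ⟨C, hC⟩ := hbd 0 h0I t htI
      exact ⟨C, fun τ hτ => hC τ ⟨by rwa [Set.uIcc_of_le h] at hτ, hJI hτ⟩⟩
    · obtain ⟨C, hC⟩ := hbd t htI 0 h0I
      exact ⟨C, fun τ hτ => hC τ ⟨by rwa [Set.uIcc_of_ge h] at hτ, hJI hτ⟩⟩
  set C' : ℝ := max C 1 with hC'def
  have hC'1 : (1:ℝ) ≤ C' := le_max_right _ _
  have hC'0 : (0:ℝ) < C' := lt_of_lt_of_le one_pos hC'1
  have hN : ∀ τ ∈ Set.uIcc (0:ℝ) t, (∑' m : Z2, ‖a τ m‖) ≤ C' :=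
    fun τ h => (hC τ h).trans (le_max_left _ _)
  set f : ℝ → Z2 → ℝ := fun τ m => if m ∈ S then 0 else ‖a τ m‖ with hfdef
  have hf0 : ∀ τ m, 0 ≤ f τ m := by
    intro τ m; by_cases h : m ∈ S <;> simp [hfdef, h]
  have hfg : ∀ τ m, f τ m ≤ ‖a τ m‖ := by
    intro τ m; by_cases h : m ∈ S <;> simp [hfdef, h]
  set F : ℝ → ℝ := fun τ => ∑' m : Z2, f τ m with hFdef
  have hgs : ∀ τ ∈ Set.uIcc (0:ℝ) t, Summable (fun m => ‖a τ m‖) :=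
    fun τ h => hsum τ (hJI h)
  have hfs : ∀ τ ∈ Set.uIcc (0:ℝ) t, Summable (f τ) := fun τ h =>
    (hgs τ h).of_nonneg_of_le (hf0 τ) (hfg τ)
  have hF0 : ∀ τ, 0 ≤ F τ := fun τ => tsum_nonneg (hf0 τ)
  have hFC : ∀ τ ∈ Set.uIcc (0:ℝ) t, F τ ≤ C' := fun τ h =>
    (Summable.tsum_le_tsum (hfg τ) (hfs τ h) (hgs τ h)).trans (hN τ h)
  have hgC : ∀ τ ∈ Set.uIcc (0:ℝ) t, ∀ m, ‖a τ m‖ ≤ C' := fun τ h m =>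
    (Summable.le_tsum (hgs τ h) m fun _ _ => norm_nonneg _).trans (hN τ h)
  have hFzero : ∀ τ ∈ Set.uIcc (0:ℝ) t, F τ = 0 → ∀ m, m ∉ S → a τ m = 0 := by
    intro τ hτ hFτ m hm
    have h1 : f τ m ≤ 0 := hFτ ▸ Summable.le_tsum (hfs τ hτ) m fun j _ => hf0 τ j
    have h2 : f τ m = ‖a τ m‖ := by simp [hfdef, hm]
    rw [h2] at h1
    exact norm_eq_zero.mp (le_antisymm h1 (norm_nonneg _))
  -- Key estimate: sum over a finite set of frequencies outside `S` of the norms of the RHS.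
  have key : ∀ τ ∈ Set.uIcc (0:ℝ) t, ∀ E : Finset Z2, (∀ m ∈ E, m ∉ S) →
      ∑ n ∈ E, ‖truncRHS R (a τ) n τ‖ ≤ 4 * C' ^ 2 * F τ := by
    intro τ hτ E hE
    have hg0 : ∀ m : Z2, 0 ≤ ‖a τ m‖ := fun m => norm_nonneg _
    have hgsum : Summable (fun m => ‖a τ m‖) := hgs τ hτ
    have hfsum : Summable (f τ) := hfs τ hτ
    set B : Z2 × Z2 × Z2 → ℝ := fun p =>
      f τ p.1 * ‖a τ p.2.1‖ * ‖a τ p.2.2‖ + ‖a τ p.1‖ * f τ p.2.1 * ‖a τ p.2.2‖ +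
        ‖a τ p.1‖ * ‖a τ p.2.1‖ * f τ p.2.2 with hBdef
    have hB0 : ∀ p, 0 ≤ B p := by
      intro p
      have h1 := mul_nonneg (mul_nonneg (hf0 τ p.1) (hg0 p.2.1)) (hg0 p.2.2)
      have h2 := mul_nonneg (mul_nonneg (hg0 p.1) (hf0 τ p.2.1)) (hg0 p.2.2)
      have h3 := mul_nonneg (mul_nonneg (hg0 p.1) (hg0 p.2.1)) (hf0 τ p.2.2)
      simp only [hBdef]; linarith
    have hs1 : Summable (fun p : Z2 × Z2 × Z2 => f τ p.1 * ‖a τ p.2.1‖ * ‖a τ p.2.2‖) :=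
      summable_triple3 (u := f τ) (v := fun m => ‖a τ m‖) (w := fun m => ‖a τ m‖) hfsum hgsum hgsum (hf0 τ) hg0 hg0
    have hs2 : Summable (fun p : Z2 × Z2 × Z2 => ‖a τ p.1‖ * f τ p.2.1 * ‖a τ p.2.2‖) :=
      summable_triple3 (u := fun m => ‖a τ m‖) (v := f τ) (w := fun m => ‖a τ m‖) hgsum hfsum hgsum hg0 (hf0 τ) hg0
    have hs3 : Summable (fun p : Z2 × Z2 × Z2 => ‖a τ p.1‖ * ‖a τ p.2.1‖ * f τ p.2.2) :=
      summable_triple3 (u := fun m => ‖a τ m‖) (v := fun m => ‖a τ m‖) (w := f τ) hgsum hgsum hfsum hg0 hg0 (hf0 τ)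
    have hBsum : Summable B := by
      simp only [hBdef]
      exact (hs1.add hs2).add hs3
    have hBt : ∑' p, B p ≤ 3 * C' ^ 2 * F τ := by
      have hsplit : ∑' p, B p
          = (∑' p : Z2 × Z2 × Z2, f τ p.1 * ‖a τ p.2.1‖ * ‖a τ p.2.2‖)
            + (∑' p : Z2 × Z2 × Z2, ‖a τ p.1‖ * f τ p.2.1 * ‖a τ p.2.2‖)
            + (∑' p : Z2 × Z2 × Z2, ‖a τ p.1‖ * ‖a τ p.2.1‖ * f τ p.2.2) := by
        simp only [hBdef]
        rw [Summable.tsum_add (hs1.add hs2) hs3, Summable.tsum_add hs1 hs2]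
      have e1 := tsum_triple3 (u := f τ) (v := fun m => ‖a τ m‖) (w := fun m => ‖a τ m‖) hfsum hgsum hgsum (hf0 τ) hg0 hg0
      have e2 := tsum_triple3 (u := fun m => ‖a τ m‖) (v := f τ) (w := fun m => ‖a τ m‖) hgsum hfsum hgsum hg0 (hf0 τ) hg0
      have e3 := tsum_triple3 (u := fun m => ‖a τ m‖) (v := fun m => ‖a τ m‖) (w := f τ) hgsum hgsum hfsum hg0 hg0 (hf0 τ)
      have hG : (∑' x, ‖a τ x‖) ≤ C' := hN τ hτ
      have hG0 : 0 ≤ ∑' x, ‖a τ x‖ := tsum_nonneg hg0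
      have hFτ : F τ = ∑' x, f τ x := rfl
      have hF0' : 0 ≤ ∑' x, f τ x := tsum_nonneg (hf0 τ)
      rw [hsplit, e1, e2, e3, hFτ]
      nlinarith [mul_le_mul hG hG hG0 hC'0.le,
        mul_le_mul_of_nonneg_left (mul_le_mul hG hG hG0 hC'0.le) hF0']
    have hHsum : ∀ n : Z2, Summable (fun p : Z2 × Z2 × Z2 =>
        if p.1 - p.2.1 + p.2.2 = n then B p else 0) := by
      intro n
      refine hBsum.of_nonneg_of_le (fun p => ?_) (fun p => ?_)
      · split
        · exact hB0 p
        · exact le_rfl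
      · split
        · exact le_rfl
        · exact hB0 p
    have hexp : ∀ z : ℤ, ‖Complex.exp (Complex.I * (z : ℂ) * (τ : ℂ))‖ = 1 := by
      intro z
      rw [Complex.norm_exp]
      norm_num [Complex.mul_re, Complex.mul_im, Complex.I_re, Complex.I_im]
    have per_n : ∀ n ∈ E, ‖truncRHS R (a τ) n τ‖
        ≤ C' ^ 2 * f τ n + ∑' p : Z2 × Z2 × Z2,
            (if p.1 - p.2.1 + p.2.2 = n then B p else 0) := by
      intro n hn
      have hnS : n ∉ S := hE n hn
      have hTnorm : ∀ p : Z2 × Z2 × Z2,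
          ‖(if p.1 - p.2.1 + p.2.2 = n ∧ p.1 ≠ n ∧ p.2.2 ≠ n ∧
              |omega4 p.1 p.2.1 p.2.2 n| ≤ (R : ℤ) then
            a τ p.1 * (starRingEnd ℂ) (a τ p.2.1) * a τ p.2.2 *
              Complex.exp (Complex.I * ((omega4 p.1 p.2.1 p.2.2 n : ℤ) : ℂ) * (τ : ℂ))
          else 0)‖ ≤ (if p.1 - p.2.1 + p.2.2 = n then B p else 0) := by
        intro p
        by_cases hc : p.1 - p.2.1 + p.2.2 = n ∧ p.1 ≠ n ∧ p.2.2 ≠ n ∧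
            |omega4 p.1 p.2.1 p.2.2 n| ≤ (R : ℤ)
        · rw [if_pos hc, if_pos hc.1]
          have hval : ‖a τ p.1 * (starRingEnd ℂ) (a τ p.2.1) * a τ p.2.2 *
              Complex.exp (Complex.I * ((omega4 p.1 p.2.1 p.2.2 n : ℤ) : ℂ) * (τ : ℂ))‖
              = ‖a τ p.1‖ * ‖a τ p.2.1‖ * ‖a τ p.2.2‖ := by
            rw [norm_mul, norm_mul, norm_mul, hexp, RCLike.norm_conj, mul_one]
          rw [hval]
          have hone : p.1 ∉ S ∨ p.2.1 ∉ S ∨ p.2.2 ∉ S := by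
            by_contra hcon
            push_neg at hcon
            obtain ⟨h1, h2, h3⟩ := hcon
            have := hS p.1 p.2.1 p.2.2 h1 h2 h3 (by rw [hc.1]; exact hc.2.2.2)
            rw [hc.1] at this
            exact hnS this
          have t1 : 0 ≤ f τ p.1 * ‖a τ p.2.1‖ * ‖a τ p.2.2‖ :=
            mul_nonneg (mul_nonneg (hf0 τ p.1) (hg0 p.2.1)) (hg0 p.2.2)
          have t2 : 0 ≤ ‖a τ p.1‖ * f τ p.2.1 * ‖a τ p.2.2‖ :=
            mul_nonneg (mul_nonneg (hg0 p.1) (hf0 τ p.2.1)) (hg0 p.2.2)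
          have t3 : 0 ≤ ‖a τ p.1‖ * ‖a τ p.2.1‖ * f τ p.2.2 :=
            mul_nonneg (mul_nonneg (hg0 p.1) (hg0 p.2.1)) (hf0 τ p.2.2)
          rcases hone with h | h | h
          · have hfeq : f τ p.1 = ‖a τ p.1‖ := by simp [hfdef, h]
            simp only [hBdef]
            rw [hfeq]
            linarith
          · have hfeq : f τ p.2.1 = ‖a τ p.2.1‖ := by simp [hfdef, h]
            simp only [hBdef]
            rw [hfeq]
            linarith
          · have hfeq : f τ p.2.2 = ‖a τ p.2.2‖ := by simp [hfdef, h]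
            simp only [hBdef]
            rw [hfeq]
            linarith
        · rw [if_neg hc, norm_zero]
          split
          · exact hB0 p
          · exact le_rfl
      have hTsum : Summable (fun p : Z2 × Z2 × Z2 =>
          ‖(if p.1 - p.2.1 + p.2.2 = n ∧ p.1 ≠ n ∧ p.2.2 ≠ n ∧
              |omega4 p.1 p.2.1 p.2.2 n| ≤ (R : ℤ) then
            a τ p.1 * (starRingEnd ℂ) (a τ p.2.1) * a τ p.2.2 *
              Complex.exp (Complex.I * ((omega4 p.1 p.2.1 p.2.2 n : ℤ) : ℂ) * (τ : ℂ))
          else 0)‖) :=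
        (hHsum n).of_nonneg_of_le (fun p => norm_nonneg _) hTnorm
      have hfirst : ‖-((‖a τ n‖ : ℂ) ^ 2) * a τ n‖ ≤ C' ^ 2 * f τ n := by
        have h1 : ‖-((‖a τ n‖ : ℂ) ^ 2) * a τ n‖ = ‖a τ n‖ ^ 2 * ‖a τ n‖ := by
          rw [norm_mul, norm_neg, norm_pow, Complex.norm_real, norm_norm]
        have hfeq : f τ n = ‖a τ n‖ := by simp [hfdef, hnS]
        rw [h1, hfeq]
        have h2 : ‖a τ n‖ ^ 2 ≤ C' ^ 2 := pow_le_pow_left₀ (norm_nonneg _) (hgC τ hτ n) 2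
        exact mul_le_mul_of_nonneg_right h2 (norm_nonneg _)
      calc ‖truncRHS R (a τ) n τ‖
          = ‖-((‖a τ n‖ : ℂ) ^ 2) * a τ n +
              ∑' p : Z2 × Z2 × Z2,
                if p.1 - p.2.1 + p.2.2 = n ∧ p.1 ≠ n ∧ p.2.2 ≠ n ∧
                    |omega4 p.1 p.2.1 p.2.2 n| ≤ (R : ℤ) then
                  a τ p.1 * (starRingEnd ℂ) (a τ p.2.1) * a τ p.2.2 *
                    Complex.exp (Complex.I * ((omega4 p.1 p.2.1 p.2.2 n : ℤ) : ℂ) * (τ : ℂ))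
                else 0‖ := by
            unfold truncRHS
            rw [norm_mul, Complex.norm_I, one_mul]
        _ ≤ ‖-((‖a τ n‖ : ℂ) ^ 2) * a τ n‖ +
              ‖∑' p : Z2 × Z2 × Z2,
                if p.1 - p.2.1 + p.2.2 = n ∧ p.1 ≠ n ∧ p.2.2 ≠ n ∧
                    |omega4 p.1 p.2.1 p.2.2 n| ≤ (R : ℤ) then
                  a τ p.1 * (starRingEnd ℂ) (a τ p.2.1) * a τ p.2.2 *
                    Complex.exp (Complex.I * ((omega4 p.1 p.2.1 p.2.2 n : ℤ) : ℂ) * (τ : ℂ))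
                else 0‖ := norm_add_le _ _
        _ ≤ C' ^ 2 * f τ n + ∑' p : Z2 × Z2 × Z2,
              (if p.1 - p.2.1 + p.2.2 = n then B p else 0) :=
            add_le_add hfirst
              ((norm_tsum_le_tsum_norm hTsum).trans (Summable.tsum_le_tsum hTnorm hTsum (hHsum n)))
    calc ∑ n ∈ E, ‖truncRHS R (a τ) n τ‖
        ≤ ∑ n ∈ E, (C' ^ 2 * f τ n + ∑' p : Z2 × Z2 × Z2,
            (if p.1 - p.2.1 + p.2.2 = n then B p else 0)) := Finset.sum_le_sum per_n
      _ = C' ^ 2 * ∑ n ∈ E, f τ n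
          + ∑ n ∈ E, ∑' p : Z2 × Z2 × Z2, (if p.1 - p.2.1 + p.2.2 = n then B p else 0) := by
          rw [Finset.sum_add_distrib, Finset.mul_sum]
      _ ≤ C' ^ 2 * F τ + 3 * C' ^ 2 * F τ := by
          refine add_le_add ?_ ?_
          · exact mul_le_mul_of_nonneg_left
              (Summable.sum_le_tsum E (fun m _ => hf0 τ m) hfsum) (by positivity)
          · have hswap : ∑ n ∈ E, ∑' p : Z2 × Z2 × Z2,
                (if p.1 - p.2.1 + p.2.2 = n then B p else 0)
                = ∑' p : Z2 × Z2 × Z2, ∑ n ∈ E, (if p.1 - p.2.1 + p.2.2 = n then B p else 0) :=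
              (Summable.tsum_finsetSum (fun n _ => hHsum n)).symm
            have hEle : ∀ p : Z2 × Z2 × Z2,
                (∑ n ∈ E, if p.1 - p.2.1 + p.2.2 = n then B p else 0) ≤ B p := by
              intro p
              rw [Finset.sum_ite_eq E (p.1 - p.2.1 + p.2.2) fun _ => B p]
              split
              · exact le_rfl
              · exact hB0 p
            have hsumE : Summable (fun p : Z2 × Z2 × Z2 =>
                ∑ n ∈ E, if p.1 - p.2.1 + p.2.2 = n then B p else 0) :=
              summable_sum fun n _ => hHsum n
            rw [hswap]
            exact (Summable.tsum_le_tsum hEle hsumE hBsum).trans hBt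
      _ = 4 * C' ^ 2 * F τ := by ring
  -- Mean value inequality in `ℓ¹` over a finite set of frequencies outside `S`.
  have hmvt : ∀ s u : ℝ, s ∈ Set.uIcc (0:ℝ) t → u ∈ Set.uIcc (0:ℝ) t → ∀ β : ℝ,
      (∀ τ ∈ Set.uIcc s u, F τ ≤ β) → ∀ E : Finset Z2, (∀ m ∈ E, m ∉ S) →
      ∑ n ∈ E, ‖a u n - a s n‖ ≤ 4 * C' ^ 2 * β * |u - s| := by
    intro s u hs hu β hβ E hE
    have hDJ : Set.uIcc s u ⊆ Set.uIcc (0:ℝ) t := Set.uIcc_subset_uIcc hs hu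
    have hDI : Set.uIcc s u ⊆ I := hDJ.trans hJI
    have hconv : Convex ℝ (Set.uIcc s u) := convex_uIcc s u
    set Φ : ℝ → PiLp 1 (fun _ : ↥E => ℂ) := fun τ => WithLp.toLp 1 (fun n => a τ (n : Z2)) with hΦdef
    set Φ' : ℝ → PiLp 1 (fun _ : ↥E => ℂ) := fun τ => WithLp.toLp 1 (fun n => truncRHS R (a τ) (n : Z2) τ)
      with hΦ'def
    have hder : ∀ τ ∈ Set.uIcc s u, HasDerivWithinAt Φ (Φ' τ) (Set.uIcc s u) τ := by
      intro τ hτ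
      have hpi : HasDerivWithinAt (fun σ => fun n : ↥E => a σ (n : Z2))
          (fun n : ↥E => truncRHS R (a τ) (n : Z2) τ) (Set.uIcc s u) τ :=
        hasDerivWithinAt_pi.mpr fun n => (hderiv (n : Z2) τ (hDI hτ)).mono hDI
      exact ((PiLp.continuousLinearEquiv 1 ℂ
        (fun _ : ↥E => ℂ)).symm.toContinuousLinearMap.restrictScalars
          ℝ).hasFDerivAt.comp_hasDerivWithinAt τ hpi
    have hβ0 : 0 ≤ β := (hF0 s).trans (hβ s Set.left_mem_uIcc)
    have hbound : ∀ τ ∈ Set.uIcc s u, ‖Φ' τ‖ ≤ 4 * C' ^ 2 * β := by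
      intro τ hτ
      have h1 : ‖Φ' τ‖ = ∑ n ∈ E, ‖truncRHS R (a τ) n τ‖ := by
        rw [PiLp.norm_eq_sum (by norm_num : 0 < (1 : ℝ≥0∞).toReal)]
        simp only [ENNReal.toReal_one, Real.rpow_one, one_div_one]
        rw [← Finset.sum_coe_sort E fun n => ‖truncRHS R (a τ) n τ‖]
      rw [h1]
      refine (key τ (hDJ hτ) E hE).trans ?_
      have h2 := hβ τ hτ
      nlinarith [hF0 τ, sq_nonneg C']
    have hmv := hconv.norm_image_sub_le_of_norm_hasDerivWithin_le hder hbound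
      Set.left_mem_uIcc Set.right_mem_uIcc
    have hnorm : ‖Φ u - Φ s‖ = ∑ n ∈ E, ‖a u n - a s n‖ := by
      rw [PiLp.norm_eq_sum (by norm_num : 0 < (1 : ℝ≥0∞).toReal)]
      simp only [ENNReal.toReal_one, Real.rpow_one, one_div_one]
      simp only [PiLp.sub_apply]
      rw [← Finset.sum_coe_sort E fun n => ‖a u n - a s n‖]
    rw [hnorm, Real.norm_eq_abs] at hmv
    exact hmv
  set δ : ℝ := 1 / (8 * C' ^ 2) with hδdef
  have hδ0 : 0 < δ := by positivity
  -- Local step: if `F` vanishes at `s`, it vanishes within `δ` of `s`.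
  have step : ∀ s ∈ Set.uIcc (0:ℝ) t, F s = 0 →
      ∀ u ∈ Set.uIcc (0:ℝ) t, |u - s| ≤ δ → F u = 0 := by
    intro s hsJ hFs u huJ hus
    have hsub : Set.uIcc s u ⊆ Set.uIcc (0:ℝ) t := Set.uIcc_subset_uIcc hsJ huJ
    have has : ∀ m, m ∉ S → a s m = 0 := hFzero s hsJ hFs
    have hiter : ∀ k : ℕ, ∀ u' ∈ Set.uIcc s u, F u' ≤ C' / 2 ^ k := by
      intro k
      induction k with
      | zero =>
        intro u' hu'
        simpa using hFC u' (hsub hu')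
      | succ k ih =>
        intro u' hu'
        have hu'J : u' ∈ Set.uIcc (0:ℝ) t := hsub hu'
        have hsub' : Set.uIcc s u' ⊆ Set.uIcc s u :=
          Set.uIcc_subset_uIcc Set.left_mem_uIcc hu'
        have hβ : ∀ τ ∈ Set.uIcc s u', F τ ≤ C' / 2 ^ k := fun τ hτ => ih τ (hsub' hτ)
        have habs : |u' - s| ≤ δ := (Set.abs_sub_left_of_mem_uIcc hu').trans hus
        refine Summable.tsum_le_of_sum_le (hfs u' hu'J) ?_
        intro E
        have hEE : ∑ m ∈ E, f u' m
            = ∑ m ∈ E.filter (fun m => m ∉ S), ‖a u' m - a s m‖ := by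
          rw [← Finset.sum_filter_add_sum_filter_not E (fun m => m ∉ S)]
          have hz : ∑ m ∈ E.filter (fun m => ¬ m ∉ S), f u' m = 0 :=
            Finset.sum_eq_zero fun m hm => by
              have hmS : m ∈ S := not_not.mp (Finset.mem_filter.mp hm).2
              simp [hfdef, hmS]
          rw [hz, add_zero]
          refine Finset.sum_congr rfl fun m hm => ?_
          have hmS : m ∉ S := (Finset.mem_filter.mp hm).2
          rw [has m hmS, sub_zero]
          simp [hfdef, hmS]
        rw [hEE]
        refine (hmvt s u' hsJ hu'J (C' / 2 ^ k) hβ (E.filter (fun m => m ∉ S))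
          (fun m hm => (Finset.mem_filter.mp hm).2)).trans ?_
        have hmul : 4 * C' ^ 2 * (C' / 2 ^ k) * |u' - s| ≤ 4 * C' ^ 2 * (C' / 2 ^ k) * δ :=
          mul_le_mul_of_nonneg_left habs (by positivity)
        refine hmul.trans (le_of_eq ?_)
        rw [hδdef, pow_succ]
        field_simp
        ring
    have hlim : ∀ k : ℕ, F u ≤ C' / 2 ^ k := fun k => hiter k u Set.right_mem_uIcc
    have hle : F u ≤ 0 := by
      by_contra hpos
      push_neg at hpos
      obtain ⟨k, hk⟩ := pow_unbounded_of_one_lt (C' / F u) one_lt_two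
      have h2k : (0:ℝ) < 2 ^ k := by positivity
      rw [div_lt_iff₀ hpos] at hk
      have hlk := hlim k
      rw [le_div_iff₀ h2k] at hlk
      nlinarith
    exact le_antisymm hle (hF0 u)
  -- Global propagation along the interval.
  have main : ∀ k : ℕ, ∀ u ∈ Set.uIcc (0:ℝ) t, |u| ≤ (k : ℝ) * δ → F u = 0 := by
    intro k
    induction k with
    | zero =>
      intro u hu h
      have hu0 : u = 0 := by
        have h0 : |u| ≤ 0 := by simpa using h
        exact _root_.abs_eq_zero.mp (le_antisymm h0 (_root_.abs_nonneg u))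
      subst hu0
      have hz : ∀ m, f 0 m = 0 := fun m => by
        by_cases hm : m ∈ S
        · simp [hfdef, hm]
        · simp [hfdef, hm, hinit m hm]
      calc F 0 = ∑' m : Z2, f 0 m := rfl
        _ = 0 := by rw [tsum_congr hz, tsum_zero]
    | succ k ih =>
      intro u hu h
      push_cast at h
      rcases le_total 0 u with h0 | h0
      · have hsmem : min ((k : ℝ) * δ) u ∈ Set.uIcc 0 u := by
          rw [Set.uIcc_of_le h0]
          exact ⟨le_min (by positivity) h0, min_le_right _ _⟩
        have hsJ : min ((k : ℝ) * δ) u ∈ Set.uIcc (0:ℝ) t :=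
          Set.uIcc_subset_uIcc Set.left_mem_uIcc hu hsmem
        have hs2 : |min ((k : ℝ) * δ) u| ≤ (k : ℝ) * δ := by
          rw [_root_.abs_of_nonneg (le_min (by positivity) h0)]
          exact min_le_left _ _
        have hs3 : |u - min ((k : ℝ) * δ) u| ≤ δ := by
          rcases le_total ((k : ℝ) * δ) u with hc | hc
          · rw [min_eq_left hc, _root_.abs_of_nonneg (by linarith)]
            rw [_root_.abs_of_nonneg h0] at h
            linarith
          · rw [min_eq_right hc]
            simpa using hδ0.le
        exact step _ hsJ (ih _ hsJ hs2) u hu hs3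
      · have hkδ0 : (0:ℝ) ≤ (k : ℝ) * δ := by positivity
        have hsmem : max (-((k : ℝ) * δ)) u ∈ Set.uIcc 0 u := by
          rw [Set.uIcc_of_ge h0]
          exact ⟨le_max_right _ _, max_le (by linarith) h0⟩
        have hsJ : max (-((k : ℝ) * δ)) u ∈ Set.uIcc (0:ℝ) t :=
          Set.uIcc_subset_uIcc Set.left_mem_uIcc hu hsmem
        have hs2 : |max (-((k : ℝ) * δ)) u| ≤ (k : ℝ) * δ := by
          rw [_root_.abs_le]
          constructor
          · exact le_max_left _ _
          · exact max_le (by linarith) (by linarith)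
        have hs3 : |u - max (-((k : ℝ) * δ)) u| ≤ δ := by
          rcases le_total (-((k : ℝ) * δ)) u with hc | hc
          · rw [max_eq_right hc]
            simpa using hδ0.le
          · rw [max_eq_left hc, _root_.abs_of_nonpos (by linarith)]
            rw [_root_.abs_of_nonpos h0] at h
            linarith
        exact step _ hsJ (ih _ hsJ hs2) u hu hs3
  obtain ⟨k, hk⟩ := exists_nat_ge (|t| / δ)
  have hkt : |t| ≤ (k : ℝ) * δ := by
    rw [div_le_iff₀ hδ0] at hk
    linarith
  exact fun n hn => hFzero t htJ (main k t htJ hkt) n hn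


end
end
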